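/- Fix l ≥ 2. For M > l-2 with N ≡ M mod 2, the weighted number of lattice paths from (0,0) to (M,N), with a left wall at x=0 and a type-1 filter at x=l-1 (the step (l-1,y)→(l-2,y+1) is forbidden and the step (l,y)→(l-1,y+1) has weight 2), equals F(M,N) + Σ_{k=1}^{⌊(N-l+1)/(2l)⌋} F(M+2kl, N), where F(m,n) = binom(n,(n-m)/2) - binom(n,(n-m)/2 - 1). -/

import Mathlib

open Finset

/-- The x-coordinate after the first `k` steps of a path encoded by `s : Fin N → Bool`
(`true` = step `(x,y) → (x+1,y+1)`, `false` = step `(x,y) → (x-1,y+1)`), starting at `x = 0`. -/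
def pathPos {N : ℕ} (s : Fin N → Bool) (k : ℕ) : ℤ :=
  ∑ i ∈ Finset.univ.filter (fun i : Fin N => (i : ℕ) < k), (if s i then (1 : ℤ) else -1)

/-- Binomial coefficient `binom n k` with integer lower argument, `0` out of range. -/
def ibinom (n : ℕ) (k : ℤ) : ℤ :=
  if 0 ≤ k then (n.choose k.toNat : ℤ) else 0


/-- The weight of a path: the product over its steps of the weight of each step. -/
def pathWeight {N : ℕ} (w : ℤ → Bool → ℤ) (s : Fin N → Bool) : ℤ :=
  ∏ i : Fin N, w (pathPos s i.val) (s i)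

/-- `F m n = binom n ((n-m)/2) - binom n ((n-m)/2 - 1)`. -/
def F (m : ℤ) (n : ℕ) : ℤ :=
  ibinom n (((n : ℤ) - m) / 2) - ibinom n (((n : ℤ) - m) / 2 - 1)



lemma ibinom_neg {n : ℕ} {k : ℤ} (h : k < 0) : ibinom n k = 0 := by
  simp [ibinom, not_le.2 h]

lemma ibinom_big {n : ℕ} {k : ℤ} (h : (n : ℤ) < k) : ibinom n k = 0 := by
  have h0 : (0:ℤ) ≤ k := le_trans (Int.ofNat_nonneg n) h.le
  have : n < k.toNat := by omega
  simp [ibinom, h0, Nat.choose_eq_zero_of_lt this]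

lemma ibinom_pascal (n : ℕ) (k : ℤ) :
    ibinom (n+1) k = ibinom n k + ibinom n (k-1) := by
  rcases lt_trichotomy k 0 with h | h | h
  · rw [ibinom_neg h, ibinom_neg h, ibinom_neg (by omega)]; ring
  · subst h
    simp [ibinom]
  · have h0 : (0:ℤ) ≤ k := h.le
    have h1 : (0:ℤ) ≤ k - 1 := by omega
    have hk : k.toNat = (k-1).toNat + 1 := by omega
    simp only [ibinom, if_pos h0, if_pos h1, hk]
    rw [Nat.choose_succ_succ']
    push_cast
    ring

/-- parity-restricted binomial kernel -/
def aa (n : ℕ) (y : ℤ) : ℤ :=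
  if ((n : ℤ) - y) % 2 = 0 then ibinom n (((n : ℤ) - y) / 2) else 0

lemma aa_eq_zero {n : ℕ} {y : ℤ} (h : (n : ℤ) < |y|) : aa n y = 0 := by
  unfold aa
  split_ifs with hp
  · rcases lt_abs.mp h with h1 | h1
    · exact ibinom_neg (by omega)
    · exact ibinom_big (by omega)
  · rfl

lemma aa_symm (n : ℕ) (y : ℤ) : aa n y = aa n (-y) := by
  unfold aa
  have hpar : ((n:ℤ) - y) % 2 = 0 ↔ ((n:ℤ) - (-y)) % 2 = 0 := by omega
  split_ifs with h1 h2 h2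
  · obtain ⟨j, hj⟩ : ∃ j : ℤ, (n:ℤ) - y = 2*j := ⟨((n:ℤ)-y)/2, by omega⟩
    have e1 : ((n:ℤ) - y)/2 = j := by omega
    have e2 : ((n:ℤ) - (-y))/2 = (n:ℤ) - j := by omega
    rw [e1, e2]
    rcases le_or_gt j 0 with hc | hc
    · rcases lt_or_eq_of_le hc with hc' | hc'
      · rw [ibinom_neg (by omega), ibinom_big (by omega)]
      · subst hc'
        simp [ibinom, Int.toNat_natCast]
    · rcases le_or_gt ((n:ℤ)+1) j with hc2 | hc2
      · rw [ibinom_big (by omega), ibinom_neg (by omega)]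
      · have e3 : (0:ℤ) ≤ j := by omega
        have e4 : (0:ℤ) ≤ (n:ℤ) - j := by omega
        simp only [ibinom, if_pos e3, if_pos e4]
        have : ((n:ℤ) - j).toNat = n - j.toNat := by omega
        rw [this, Nat.choose_symm (by omega)]
  · exact absurd (hpar.mp h1) h2
  · exact absurd (hpar.mpr h2) h1
  · rfl

lemma aa_pascal (n : ℕ) (y : ℤ) :
    aa (n+1) y = aa n (y-1) + aa n (y+1) := by
  unfold aa
  push_cast
  by_cases hp : ((n:ℤ) + 1 - y) % 2 = 0
  · have hp1 : ((n:ℤ) - (y-1)) % 2 = 0 := by omega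
    have hp2 : ((n:ℤ) - (y+1)) % 2 = 0 := by omega
    rw [if_pos hp, if_pos hp1, if_pos hp2]
    have e1 : ((n:ℤ) - (y-1))/2 = ((n:ℤ)+1-y)/2 := by omega
    have e2 : ((n:ℤ) - (y+1))/2 = ((n:ℤ)+1-y)/2 - 1 := by omega
    rw [e1, e2, ← ibinom_pascal]
  · have hp1 : ¬ ((n:ℤ) - (y-1)) % 2 = 0 := by omega
    have hp2 : ¬ ((n:ℤ) - (y+1)) % 2 = 0 := by omega
    rw [if_neg hp, if_neg hp1, if_neg hp2]; ring

lemma aa_zero_zero : aa 0 0 = 1 := by simp [aa, ibinom]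
lemma aa_zero {y : ℤ} (h : y ≠ 0) : aa 0 y = 0 := by
  have : (0:ℤ) < |y| := abs_pos.mpr h
  exact aa_eq_zero (by exact_mod_cast this)

/-- partial theta-like sum -/
def S (l n : ℕ) (y : ℤ) : ℤ := ∑ k ∈ Finset.range (n+2), aa n (y + 2*k*l)

lemma l_mul_ge {l : ℕ} (hl : 2 ≤ l) (k : ℕ) : 2*(k:ℤ) ≤ (k:ℤ)*l := by
  have h2 : (2:ℤ) ≤ (l:ℤ) := by exact_mod_cast hl
  have h0 : (0:ℤ) ≤ (k:ℤ) := Int.ofNat_nonneg k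
  nlinarith

lemma aa_big {n : ℕ} {y : ℤ} (h : (n : ℤ) < y) : aa n y = 0 :=
  aa_eq_zero (by rwa [abs_of_nonneg (le_trans (Int.ofNat_nonneg n) h.le)])

lemma S_pascal {l : ℕ} (hl : 2 ≤ l) (n : ℕ) {y : ℤ} (hy : -2*(l:ℤ) ≤ y) :
    S l (n+1) y = S l n (y-1) + S l n (y+1) := by
  have key : ∀ z : ℤ, -2*(l:ℤ) - 1 ≤ z → aa n (z + 2*(n+2)*l) = 0 := by
    intro z hz
    have h2 : (2:ℤ) ≤ (l:ℤ) := by exact_mod_cast hl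
    apply aa_big
    push_cast
    nlinarith [mul_le_mul_of_nonneg_left h2 (show (0:ℤ) ≤ (n:ℤ)+2 by positivity)]
  unfold S
  rw [Finset.sum_range_succ]
  have e1 : ∀ k ∈ Finset.range (n+2), aa (n+1) (y + 2*k*l)
      = aa n ((y-1) + 2*k*l) + aa n ((y+1) + 2*k*l) := by
    intro k _
    rw [aa_pascal]
    ring_nf
  rw [Finset.sum_congr rfl e1, Finset.sum_add_distrib, aa_pascal]
  have t1 : aa n (y + 2*(n+2)*l - 1) = 0 := by
    have := key (y-1) (by omega); rw [← this]; ring_nf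
  have t2 : aa n (y + 2*(n+2)*l + 1) = 0 := by
    have := key (y+1) (by omega); rw [← this]; ring_nf
  push_cast
  push_cast at t1 t2
  rw [t1, t2]
  ring

lemma kill_gen {l : ℕ} (hl : 2 ≤ l) (n : ℕ) {z : ℤ} (hz : -2*(l:ℤ) - 1 ≤ z) {k : ℕ}
    (hk : n + 2 ≤ k) : aa n (z + 2*k*l) = 0 := by
  have h2 : (2:ℤ) ≤ (l:ℤ) := by exact_mod_cast hl
  have hk' : (n:ℤ) + 2 ≤ (k:ℤ) := by exact_mod_cast hk
  apply aa_big
  nlinarith [mul_le_mul_of_nonneg_left h2 (show (0:ℤ) ≤ (k:ℤ) by positivity)]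

lemma S_shift {l : ℕ} (hl : 2 ≤ l) (n : ℕ) {y : ℤ} (hy : -2*(l:ℤ) ≤ y) :
    S l n y - S l n (y + 2*l) = aa n y := by
  have h2l : (2:ℤ) ≤ (l:ℤ) := by exact_mod_cast hl
  unfold S
  rw [Finset.sum_range_succ' (fun k => aa n (y + 2*(k:ℤ)*l)) (n+1),
      Finset.sum_range_succ (fun k => aa n ((y + 2*l) + 2*(k:ℤ)*l)) (n+1)]
  have h0 : aa n (y + 2*((0:ℕ):ℤ)*l) = aa n y := by norm_num
  have hc : ∀ k ∈ Finset.range (n+1),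
      aa n (y + 2*(((k+1:ℕ)):ℤ)*l) = aa n ((y + 2*l) + 2*(k:ℤ)*l) := by
    intro k _; congr 1; push_cast; ring
  have tail : aa n ((y + 2*l) + 2*(((n+1:ℕ)):ℤ)*l) = 0 := by
    apply aa_big
    push_cast
    nlinarith [mul_le_mul_of_nonneg_left h2l (show (0:ℤ) ≤ (n:ℤ)+1 by positivity)]
  rw [Finset.sum_congr rfl hc, h0, tail]
  ring

lemma S_neg {l : ℕ} (hl : 2 ≤ l) (n : ℕ) {y : ℤ} (h1 : 0 ≤ y) (h2 : y ≤ 2*l) :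
    S l n (-y) = aa n y + S l n (2*l - y) := by
  have h2l : (2:ℤ) ≤ (l:ℤ) := by exact_mod_cast hl
  unfold S
  rw [Finset.sum_range_succ' (fun k => aa n (-y + 2*(k:ℤ)*l)) (n+1),
      Finset.sum_range_succ (fun k => aa n ((2*l - y) + 2*(k:ℤ)*l)) (n+1)]
  have h0 : aa n (-y + 2*((0:ℕ):ℤ)*l) = aa n y := by rw [aa_symm]; norm_num
  have hc : ∀ k ∈ Finset.range (n+1),
      aa n (-y + 2*(((k+1:ℕ)):ℤ)*l) = aa n ((2*l - y) + 2*(k:ℤ)*l) := by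
    intro k _
    congr 1; push_cast; ring
  have tail : aa n ((2*(l:ℤ) - y) + 2*(((n+1:ℕ)):ℤ)*l) = 0 := by
    apply aa_big
    push_cast
    nlinarith [mul_le_mul_of_nonneg_left h2l (show (0:ℤ) ≤ (n:ℤ)+1 by positivity)]
  rw [Finset.sum_congr rfl hc, h0, tail]
  ring

def L (l n : ℕ) (x : ℤ) : ℤ := S l n x + S l n (2*l - x) - S l n (-x-2) - S l n (2*l + x + 2)
def H (l n : ℕ) (x : ℤ) : ℤ := S l n x - S l n (x+2)

lemma L_pascal {l : ℕ} (hl : 2 ≤ l) (n : ℕ) {x : ℤ} (hx : -1 ≤ x) (hx2 : x ≤ l) :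
    L l (n+1) x = L l n (x-1) + L l n (x+1) := by
  have h2l : (2:ℤ) ≤ (l:ℤ) := by exact_mod_cast hl
  unfold L
  rw [S_pascal hl n (by omega : -2*(l:ℤ) ≤ x),
      S_pascal hl n (by omega : -2*(l:ℤ) ≤ 2*(l:ℤ) - x),
      S_pascal hl n (by omega : -2*(l:ℤ) ≤ -x-2),
      S_pascal hl n (by omega : -2*(l:ℤ) ≤ 2*(l:ℤ) + x + 2)]
  have e : ∀ z w : ℤ, z = w → S l n z = S l n w := fun z w h => by rw [h]
  rw [e (2*(l:ℤ) - x - 1) (2*l - (x+1)) (by ring),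
      e (2*(l:ℤ) - x + 1) (2*l - (x-1)) (by ring),
      e (-x - 2 - 1) (-(x+1) - 2) (by ring),
      e (-x - 2 + 1) (-(x-1) - 2) (by ring),
      e (2*(l:ℤ) + x + 2 - 1) (2*l + (x-1) + 2) (by ring),
      e (2*(l:ℤ) + x + 2 + 1) (2*l + (x+1) + 2) (by ring)]
  ring

lemma H_pascal {l : ℕ} (hl : 2 ≤ l) (n : ℕ) {x : ℤ} (hx : 0 ≤ x) :
    H l (n+1) x = H l n (x-1) + H l n (x+1) := by
  have h2l : (2:ℤ) ≤ (l:ℤ) := by exact_mod_cast hl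
  unfold H
  rw [S_pascal hl n (by omega : -2*(l:ℤ) ≤ x),
      S_pascal hl n (by omega : -2*(l:ℤ) ≤ x+2)]
  have e : ∀ z w : ℤ, z = w → S l n z = S l n w := fun z w h => by rw [h]
  rw [e (x + 2 - 1) ((x+1)) (by ring), e (x+2+1) ((x+1)+2) (by ring)]
  have : x - 1 + 2 = x + 1 := by ring
  rw [this]
  ring

lemma L_neg_one (l n : ℕ) : L l n (-1) = 0 := by
  unfold L
  have e : ∀ z w : ℤ, z = w → S l n z = S l n w := fun z w h => by rw [h]
  rw [e (-(-1) - 2) (-1) (by ring), e (2*(l:ℤ) + (-1) + 2) (2*l - (-1)) (by ring)]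
  ring

lemma L_top {l : ℕ} (hl : 2 ≤ l) (n : ℕ) : L l n ((l:ℤ) - 1) = 0 := by
  have h2l : (2:ℤ) ≤ (l:ℤ) := by exact_mod_cast hl
  unfold L
  have e : ∀ z w : ℤ, z = w → S l n z = S l n w := fun z w h => by rw [h]
  rw [e (2*(l:ℤ) - ((l:ℤ)-1)) ((l:ℤ)+1) (by ring),
      e (-((l:ℤ)-1) - 2) (-((l:ℤ)+1)) (by ring),
      e (2*(l:ℤ) + ((l:ℤ)-1) + 2) (((l:ℤ)+1) + 2*l) (by ring)]
  rw [S_neg hl n (by omega : (0:ℤ) ≤ (l:ℤ)+1) (by omega : (l:ℤ)+1 ≤ 2*l)]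
  have sh := S_shift hl n (by omega : -2*(l:ℤ) ≤ (l:ℤ)+1)
  have e2 : 2*(l:ℤ) - ((l:ℤ)+1) = (l:ℤ) - 1 := by ring
  rw [e2] at *
  linarith

lemma glue {l : ℕ} (hl : 2 ≤ l) (n : ℕ) :
    H l (n+1) ((l:ℤ) - 1) = L l n ((l:ℤ) - 2) + 2 * H l n (l:ℤ) := by
  have h2l : (2:ℤ) ≤ (l:ℤ) := by exact_mod_cast hl
  unfold H L
  rw [S_pascal hl n (by omega : -2*(l:ℤ) ≤ (l:ℤ)-1),
      S_pascal hl n (by omega : -2*(l:ℤ) ≤ (l:ℤ)-1+2)]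
  have e : ∀ z w : ℤ, z = w → S l n z = S l n w := fun z w h => by rw [h]
  rw [e ((l:ℤ) - 1 + 2 - 1) ((l:ℤ)) (by ring),
      e ((l:ℤ) - 1 + 2 + 1) ((l:ℤ)+2) (by ring),
      e ((l:ℤ) - 1 - 1) ((l:ℤ) - 2) (by ring),
      e ((l:ℤ) - 1 + 1) ((l:ℤ)) (by ring),
      e (2*(l:ℤ) - ((l:ℤ)-2)) ((l:ℤ)+2) (by ring),
      e (-((l:ℤ)-2) - 2) (-(l:ℤ)) (by ring),
      e (2*(l:ℤ) + ((l:ℤ)-2) + 2) ((l:ℤ) + 2*l) (by ring)]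
  rw [S_neg hl n (by omega : (0:ℤ) ≤ (l:ℤ)) (by omega : (l:ℤ) ≤ 2*l)]
  have sh := S_shift hl n (by omega : -2*(l:ℤ) ≤ (l:ℤ))
  have e2 : 2*(l:ℤ) - (l:ℤ) = (l:ℤ) := by ring
  rw [e2] at *
  linarith

lemma S_zero_eval {l : ℕ} (hl : 2 ≤ l) (y : ℤ) :
    S l 0 y = (if y = 0 then 1 else 0) + (if y = -2*l then 1 else 0) := by
  unfold S
  rw [Finset.sum_range_succ, Finset.sum_range_one]
  have h1 : aa 0 (y + 2*((0:ℕ):ℤ)*l) = if y = 0 then 1 else 0 := by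
    rw [show y + 2*((0:ℕ):ℤ)*l = y by push_cast; ring]
    split_ifs with h
    · rw [h]; exact aa_zero_zero
    · exact aa_zero h
  have h2 : aa 0 (y + 2*((1:ℕ):ℤ)*l) = if y = -2*l then 1 else 0 := by
    rw [show y + 2*((1:ℕ):ℤ)*l = y + 2*l by push_cast; ring]
    split_ifs with h
    · rw [h, show -2*(l:ℤ) + 2*l = 0 by ring]; exact aa_zero_zero
    · apply aa_zero; omega
  rw [h1, h2]

lemma L_zero_eval {l : ℕ} (hl : 2 ≤ l) {x : ℤ} (hx : 0 ≤ x) (hx2 : x ≤ (l:ℤ) - 2) :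
    L l 0 x = if x = 0 then 1 else 0 := by
  have h2l : (2:ℤ) ≤ (l:ℤ) := by exact_mod_cast hl
  unfold L
  rw [S_zero_eval hl, S_zero_eval hl, S_zero_eval hl, S_zero_eval hl]
  have c1 : ¬ (x = -2*(l:ℤ)) := by omega
  have c2 : ¬ (2*(l:ℤ) - x = 0) := by omega
  have c3 : ¬ (2*(l:ℤ) - x = -2*l) := by omega
  have c4 : ¬ (-x - 2 = 0) := by omega
  have c5 : ¬ (-x - 2 = -2*(l:ℤ)) := by omega
  have c6 : ¬ (2*(l:ℤ) + x + 2 = 0) := by omega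
  have c7 : ¬ (2*(l:ℤ) + x + 2 = -2*l) := by omega
  rw [if_neg c1, if_neg c2, if_neg c3, if_neg c4, if_neg c5, if_neg c6, if_neg c7]
  ring

lemma H_zero_eval {l : ℕ} (hl : 2 ≤ l) {x : ℤ} (hx : 1 ≤ x) :
    H l 0 x = 0 := by
  have h2l : (2:ℤ) ≤ (l:ℤ) := by exact_mod_cast hl
  unfold H
  rw [S_zero_eval hl, S_zero_eval hl]
  have c1 : ¬ (x = 0) := by omega
  have c2 : ¬ (x = -2*(l:ℤ)) := by omega
  have c3 : ¬ (x + 2 = 0) := by omega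
  have c4 : ¬ (x + 2 = -2*(l:ℤ)) := by omega
  rw [if_neg c1, if_neg c2, if_neg c3, if_neg c4]
  ring

/-- weight of arriving at `y-1` by a left step from `y` (0 if forbidden). -/
def cc (l : ℕ) (y : ℤ) : ℤ := if y = 0 ∨ y = (l:ℤ)-1 then 0 else if y = (l:ℤ) then 2 else 1

/-- transfer-matrix count -/
def phi (l : ℕ) : ℕ → ℤ → ℤ
  | 0, x => if x = 0 then 1 else 0
  | (n+1), x => phi l n (x-1) + cc l (x+1) * phi l n (x+1)

noncomputable def Psi (l n : ℕ) (x : ℤ) : ℤ :=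
  if x < 0 then 0 else if x ≤ (l:ℤ)-2 then L l n x else H l n x

lemma phi_eq_Psi {l : ℕ} (hl : 2 ≤ l) (n : ℕ) (x : ℤ) : phi l n x = Psi l n x := by
  have h2l : (2:ℤ) ≤ (l:ℤ) := by exact_mod_cast hl
  induction n generalizing x with
  | zero =>
    unfold phi Psi
    by_cases h0 : x < 0
    · rw [if_pos h0, if_neg (by omega)]
    · rw [if_neg h0]
      by_cases h1 : x ≤ (l:ℤ)-2
      · rw [if_pos h1, L_zero_eval hl (by omega) h1]
      · rw [if_neg h1, H_zero_eval hl (by omega), if_neg (by omega)]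
  | succ n ih =>
    show phi l n (x-1) + cc l (x+1) * phi l n (x+1) = Psi l (n+1) x
    rw [ih, ih]
    unfold Psi cc
    by_cases hA : x ≤ -2
    · rw [if_pos (by omega : x - 1 < 0), if_pos (by omega : x + 1 < 0),
        if_pos (by omega : x < 0)]
      ring
    by_cases hB : x = -1
    · subst hB
      norm_num
    have hx0 : 0 ≤ x := by omega
    by_cases hC : x = 0
    · subst hC
      have e1 : (0:ℤ) - 1 = -1 := by ring
      have e2 : (0:ℤ) + 1 = 1 := by ring
      rw [e1, e2]
      rw [if_pos (show (-1:ℤ) < 0 by norm_num), if_neg (show ¬ (0:ℤ) < 0 by norm_num),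
        if_pos (show (0:ℤ) ≤ (l:ℤ) - 2 by omega),
        L_pascal hl n (by norm_num) (by omega : (0:ℤ) ≤ (l:ℤ)), e1, e2, L_neg_one]
      by_cases hl2 : (l:ℤ) = 2
      · rw [if_pos (show (1:ℤ) = 0 ∨ (1:ℤ) = (l:ℤ)-1 from Or.inr (by omega))]
        rw [show L l n 1 = 0 from by rw [show (1:ℤ) = (l:ℤ)-1 by omega]; exact L_top hl n]
        ring
      · rw [if_neg (show ¬ ((1:ℤ) = 0 ∨ (1:ℤ) = (l:ℤ)-1) by omega),
          if_neg (show ¬ (1:ℤ) = (l:ℤ) by omega),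
          if_neg (show ¬ (1:ℤ) < 0 by norm_num),
          if_pos (show (1:ℤ) ≤ (l:ℤ)-2 by omega)]
        ring
    by_cases hD : x ≤ (l:ℤ) - 3
    · -- interior low region, 1 ≤ x ≤ l-3
      rw [if_neg (by omega : ¬ x < 0), if_pos (by omega : x ≤ (l:ℤ)-2),
        L_pascal hl n (by omega : (-1:ℤ) ≤ x) (by omega : x ≤ (l:ℤ)),
        if_neg (by omega : ¬ x - 1 < 0), if_pos (by omega : x - 1 ≤ (l:ℤ)-2),
        if_neg (by omega : ¬ (x+1 = 0 ∨ x+1 = (l:ℤ)-1)),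
        if_neg (by omega : ¬ x+1 = (l:ℤ)),
        if_neg (by omega : ¬ x + 1 < 0), if_pos (by omega : x + 1 ≤ (l:ℤ)-2)]
      ring
    by_cases hE : x = (l:ℤ) - 2
    · rw [if_neg (by omega : ¬ x < 0), if_pos (by omega : x ≤ (l:ℤ)-2),
        L_pascal hl n (by omega : (-1:ℤ) ≤ x) (by omega : x ≤ (l:ℤ)),
        if_neg (by omega : ¬ x - 1 < 0), if_pos (by omega : x - 1 ≤ (l:ℤ)-2),
        if_pos (by omega : x+1 = 0 ∨ x+1 = (l:ℤ)-1)]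
      have : x + 1 = (l:ℤ) - 1 := by omega
      rw [this, L_top hl]
      ring
    by_cases hF : x = (l:ℤ) - 1
    · subst hF
      rw [if_neg (by omega : ¬ (l:ℤ)-1 < 0), if_neg (by omega : ¬ (l:ℤ)-1 ≤ (l:ℤ)-2),
        glue hl n,
        if_neg (by omega : ¬ (l:ℤ)-1-1 < 0), if_pos (by omega : (l:ℤ)-1-1 ≤ (l:ℤ)-2),
        if_neg (by omega : ¬ ((l:ℤ)-1+1 = 0 ∨ (l:ℤ)-1+1 = (l:ℤ)-1)),
        if_pos (by omega : (l:ℤ)-1+1 = (l:ℤ)),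
        if_neg (by omega : ¬ (l:ℤ)-1+1 < 0), if_neg (by omega : ¬ (l:ℤ)-1+1 ≤ (l:ℤ)-2)]
      try rw [show (l:ℤ)-1-1 = (l:ℤ)-2 by ring]
      try rw [show (l:ℤ)-1+1 = (l:ℤ) by ring]
      try ring
    · -- x ≥ l
      have hxl : (l:ℤ) ≤ x := by omega
      rw [if_neg (by omega : ¬ x < 0), if_neg (by omega : ¬ x ≤ (l:ℤ)-2),
        H_pascal hl n (by omega : (0:ℤ) ≤ x),
        if_neg (by omega : ¬ x - 1 < 0), if_neg (by omega : ¬ x - 1 ≤ (l:ℤ)-2),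
        if_neg (by omega : ¬ (x+1 = 0 ∨ x+1 = (l:ℤ)-1)),
        if_neg (by omega : ¬ x+1 = (l:ℤ)),
        if_neg (by omega : ¬ x + 1 < 0), if_neg (by omega : ¬ x + 1 ≤ (l:ℤ)-2)]
      ring



lemma pathPos_eq_sum {N : ℕ} (s : Fin N → Bool) (k : ℕ) :
    pathPos s k = ∑ i : Fin N, (if (i : ℕ) < k then (if s i then (1:ℤ) else -1) else 0) := by
  rw [pathPos, Finset.sum_filter]

lemma pathPos_snoc {N : ℕ} (t : Fin N → Bool) (b : Bool) {k : ℕ} (hk : k ≤ N) :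
    pathPos (Fin.snoc t b) k = pathPos t k := by
  rw [pathPos_eq_sum, pathPos_eq_sum, Fin.sum_univ_castSucc]
  simp only [Fin.snoc_castSucc, Fin.coe_castSucc, Fin.snoc_last, Fin.val_last]
  rw [if_neg (by omega : ¬ N < k)]
  ring

lemma pathPos_snoc_succ {N : ℕ} (t : Fin N → Bool) (b : Bool) :
    pathPos (Fin.snoc t b) (N+1) = pathPos t N + (if b then (1:ℤ) else -1) := by
  rw [pathPos_eq_sum, pathPos_eq_sum, Fin.sum_univ_castSucc]
  simp only [Fin.snoc_castSucc, Fin.coe_castSucc, Fin.snoc_last, Fin.val_last]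
  rw [if_pos (by omega : N < N + 1)]
  congr 1
  apply Finset.sum_congr rfl
  intro i _
  rw [if_pos (by omega : (i:ℕ) < N + 1), if_pos i.isLt]

lemma pathWeight_snoc {N : ℕ} (w : ℤ → Bool → ℤ) (t : Fin N → Bool) (b : Bool) :
    pathWeight w (Fin.snoc t b) = pathWeight w t * w (pathPos t N) b := by
  rw [pathWeight, pathWeight, Fin.prod_univ_castSucc]
  simp only [Fin.snoc_castSucc, Fin.coe_castSucc, Fin.snoc_last, Fin.val_last]
  congr 1
  · apply Finset.prod_congr rfl
    intro i _
    rw [pathPos_snoc t b (le_of_lt i.isLt)]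
  · rw [pathPos_snoc t b (le_refl N)]

def Pcond (l : ℕ) {N : ℕ} (x : ℤ) (s : Fin N → Bool) : Prop :=
  pathPos s N = x ∧ (∀ i : Fin N, pathPos s i.val = 0 → s i = true) ∧
  (∀ i : Fin N, pathPos s i.val = (l : ℤ) - 1 → s i = true)

def ww (l : ℕ) : ℤ → Bool → ℤ := fun x b => if x = (l : ℤ) ∧ b = false then 2 else 1

open scoped Classical in
noncomputable def Gval (l N : ℕ) (x : ℤ) : ℤ :=
  ∑ s : Fin N → Bool, if Pcond l x s then pathWeight (ww l) s else 0

lemma Pcond_snoc (l : ℕ) {N : ℕ} (x : ℤ) (t : Fin N → Bool) (b : Bool) :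
    Pcond l x (Fin.snoc t b) ↔
      (pathPos t N + (if b then (1:ℤ) else -1) = x ∧
       (∀ i : Fin N, pathPos t i.val = 0 → t i = true) ∧
       (∀ i : Fin N, pathPos t i.val = (l : ℤ) - 1 → t i = true) ∧
       (pathPos t N = 0 → b = true) ∧ (pathPos t N = (l : ℤ) - 1 → b = true)) := by
  unfold Pcond
  rw [pathPos_snoc_succ]
  constructor
  · rintro ⟨h1, h2, h3⟩
    refine ⟨h1, fun i hi => ?_, fun i hi => ?_, fun h => ?_, fun h => ?_⟩
    · have := h2 i.castSucc
        (by rw [Fin.coe_castSucc, pathPos_snoc t b (le_of_lt i.isLt)]; exact hi)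
      rwa [Fin.snoc_castSucc] at this
    · have := h3 i.castSucc
        (by rw [Fin.coe_castSucc, pathPos_snoc t b (le_of_lt i.isLt)]; exact hi)
      rwa [Fin.snoc_castSucc] at this
    · have := h2 (Fin.last N)
        (by rw [Fin.val_last, pathPos_snoc t b (le_refl N)]; exact h)
      rwa [Fin.snoc_last] at this
    · have := h3 (Fin.last N)
        (by rw [Fin.val_last, pathPos_snoc t b (le_refl N)]; exact h)
      rwa [Fin.snoc_last] at this
  · rintro ⟨h1, h2, h3, h4, h5⟩
    refine ⟨h1, fun i => ?_, fun i => ?_⟩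
    · induction i using Fin.lastCases with
      | last =>
        intro hi
        rw [Fin.snoc_last]
        apply h4
        rwa [Fin.val_last, pathPos_snoc t b (le_refl N)] at hi
      | cast j =>
        intro hi
        rw [Fin.snoc_castSucc]
        apply h2
        rwa [Fin.coe_castSucc, pathPos_snoc t b (le_of_lt j.isLt)] at hi
    · induction i using Fin.lastCases with
      | last =>
        intro hi
        rw [Fin.snoc_last]
        apply h5
        rwa [Fin.val_last, pathPos_snoc t b (le_refl N)] at hi
      | cast j =>
        intro hi
        rw [Fin.snoc_castSucc]
        apply h3
        rwa [Fin.coe_castSucc, pathPos_snoc t b (le_of_lt j.isLt)] at hi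

lemma Gval_zero (l : ℕ) (x : ℤ) : Gval l 0 x = if x = 0 then 1 else 0 := by
  classical
  rw [Gval]
  have key : ∀ s : Fin 0 → Bool,
      (if Pcond l x s then pathWeight (ww l) s else 0) = if x = 0 then 1 else 0 := by
    intro s
    have hp : pathPos s 0 = 0 := by simp [pathPos]
    have hw : pathWeight (ww l) s = 1 := by simp [pathWeight]
    by_cases h : x = 0
    · subst h
      rw [if_pos ⟨hp, fun i => i.elim0, fun i => i.elim0⟩, if_pos rfl, hw]
    · rw [if_neg, if_neg h]
      rintro ⟨h1, -, -⟩
      exact h (by rw [← h1, hp])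
  rw [Finset.sum_congr rfl (fun s _ => key s), Finset.sum_const]
  have hc : (Finset.univ : Finset (Fin 0 → Bool)).card = 1 := by simp
  rw [hc, one_smul]

lemma Gval_succ (l N : ℕ) (x : ℤ) :
    Gval l (N+1) x = Gval l N (x-1) + cc l (x+1) * Gval l N (x+1) := by
  classical
  rw [Gval]
  rw [← Equiv.sum_comp (Fin.snocEquiv (fun _ => Bool))
    (fun s => if Pcond l x s then pathWeight (ww l) s else 0)]
  rw [Fintype.sum_prod_type]
  rw [Fintype.sum_bool]
  have key : ∀ b : Bool, ∀ t : Fin N → Bool,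
      (if Pcond l x (Fin.snocEquiv (fun _ => Bool) (b, t)) then
        pathWeight (ww l) (Fin.snocEquiv (fun _ => Bool) (b, t)) else 0)
      = (if b then (if Pcond l (x-1) t then pathWeight (ww l) t else 0)
         else cc l (x+1) * (if Pcond l (x+1) t then pathWeight (ww l) t else 0)) := by
    intro b t
    have happ : (Fin.snocEquiv (fun _ => Bool) (b, t)) = Fin.snoc t b := by
      ext i
      simp [Fin.snocEquiv]
    rw [happ, pathWeight_snoc]
    cases b with
    | true =>
      simp only [eq_self_iff_true, if_true]
      have hcond : Pcond l x (Fin.snoc t true) ↔ Pcond l (x-1) t := by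
        rw [Pcond_snoc]
        simp only [eq_self_iff_true, if_true]
        unfold Pcond
        constructor
        · rintro ⟨h1, h2, h3, -, -⟩
          exact ⟨by omega, h2, h3⟩
        · rintro ⟨h1, h2, h3⟩
          exact ⟨by omega, h2, h3, fun _ => trivial, fun _ => trivial⟩
      rw [if_congr hcond rfl rfl]
      have hw : ww l (pathPos t N) true = 1 := by simp [ww]
      rw [hw, mul_one]
    | false =>
      simp only [Bool.false_eq_true, if_false]
      by_cases hbad : x + 1 = 0 ∨ x + 1 = (l:ℤ) - 1
      · have hcondF : ¬ Pcond l x (Fin.snoc t false) := by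
          rw [Pcond_snoc]
          simp only [Bool.false_eq_true, if_false]
          rintro ⟨h1, -, -, h4, h5⟩
          rcases hbad with hb | hb
          · exact h4 (by omega)
          · exact h5 (by omega)
        rw [if_neg hcondF, cc, if_pos hbad, zero_mul]
      · have hcond : Pcond l x (Fin.snoc t false) ↔ Pcond l (x+1) t := by
          rw [Pcond_snoc]
          simp only [Bool.false_eq_true, if_false]
          unfold Pcond
          constructor
          · rintro ⟨h1, h2, h3, -, -⟩
            exact ⟨by omega, h2, h3⟩
          · rintro ⟨h1, h2, h3⟩
            refine ⟨by omega, h2, h3, ?_, ?_⟩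
            · intro h0
              exact absurd (show x + 1 = 0 by omega) (fun hb => hbad (Or.inl hb))
            · intro h0
              exact absurd (show x + 1 = (l:ℤ) - 1 by omega) (fun hb => hbad (Or.inr hb))
        rw [if_congr hcond rfl rfl, cc, if_neg hbad]
        by_cases hx : Pcond l (x+1) t
        · rw [if_pos hx, if_pos hx]
          have hpt : pathPos t N = x + 1 := hx.1
          rw [hpt]
          unfold ww
          by_cases hxl : x + 1 = (l:ℤ)
          · rw [if_pos ⟨hxl, rfl⟩, if_pos hxl]; ring
          · rw [if_neg (by tauto), if_neg hxl]; ring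
        · rw [if_neg hx, if_neg hx]
          simp
  rw [Finset.sum_congr rfl (fun t _ => key true t),
      Finset.sum_congr rfl (fun t _ => key false t)]
  simp only [eq_self_iff_true, if_true, Bool.false_eq_true, if_false]
  rw [Gval, Gval, Finset.mul_sum]



lemma F_eq_aa {n : ℕ} {m : ℤ} (hpar : ((n:ℤ) - m) % 2 = 0) :
    F m n = aa n m - aa n (m+2) := by
  unfold F aa
  rw [if_pos hpar, if_pos (show ((n:ℤ) - (m+2)) % 2 = 0 by omega)]
  have : ((n:ℤ) - (m+2)) / 2 = ((n:ℤ) - m) / 2 - 1 := by omega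
  rw [this]

lemma F_big {n : ℕ} {m : ℤ} (h : (n:ℤ) < m) : F m n = 0 := by
  unfold F
  rw [ibinom_neg (by omega), ibinom_neg (by omega)]
  ring

lemma Gval_eq_phi (l N : ℕ) (x : ℤ) : Gval l N x = phi l N x := by
  induction N generalizing x with
  | zero => rw [Gval_zero]; rfl
  | succ n ih =>
    rw [Gval_succ, ih, ih]
    rfl


/-- For `l ≥ 2` and `M > l-2`, the weighted number of lattice paths from `(0,0)` to `(M,N)` with
a left wall at `x = 0` and a type-1 filter at `x = l-1` (step `(l-1,y)→(l-2,y+1)` forbidden,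
step `(l,y)→(l-1,y+1)` of weight 2) equals `F M N + Σ_{k=1}^{⌊(N-l+1)/(2l)⌋} F (M+2kl) N`. -/
theorem wall_filter_right_weighted_count (l M N : ℕ) (hl : 2 ≤ l) (hM : l - 2 < M)
    (h2 : N % 2 = M % 2) :
    (∑ᶠ s ∈ {s : Fin N → Bool |
        pathPos s N = M ∧
        (∀ i : Fin N, pathPos s i.val = 0 → s i = true) ∧
        (∀ i : Fin N, pathPos s i.val = (l : ℤ) - 1 → s i = true)},
      pathWeight (fun x b => if x = (l : ℤ) ∧ b = false then 2 else 1) s) =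
      F M N + ∑ k ∈ Finset.Icc (1 : ℤ) (Int.fdiv ((N : ℤ) - l + 1) (2 * l)),
        F ((M : ℤ) + 2 * k * l) N := by
  
  classical
  have h2l : (2:ℤ) ≤ (l:ℤ) := by exact_mod_cast hl
  have hMl : (l:ℤ) - 1 ≤ (M:ℤ) := by omega
  -- Step 1: finsum to Gval
  have hset : {s : Fin N → Bool |
        pathPos s N = M ∧
        (∀ i : Fin N, pathPos s i.val = 0 → s i = true) ∧
        (∀ i : Fin N, pathPos s i.val = (l : ℤ) - 1 → s i = true)}
      = ↑(Finset.univ.filter (fun s : Fin N → Bool => Pcond l (M:ℤ) s)) := by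
    ext s
    rw [Finset.mem_coe, Finset.mem_filter]
    simp [Pcond]
  rw [hset, finsum_mem_coe_finset]
  have hG : ∑ s ∈ Finset.univ.filter (fun s : Fin N → Bool => Pcond l (M:ℤ) s),
      pathWeight (fun x b => if x = (l : ℤ) ∧ b = false then 2 else 1) s = Gval l N M := by
    rw [Finset.sum_filter, Gval]
    apply Finset.sum_congr rfl
    intro s _
    exact if_congr Iff.rfl rfl rfl
  rw [hG, Gval_eq_phi, phi_eq_Psi hl]
  -- Step 2: Psi = H
  rw [Psi, if_neg (by omega : ¬ (M:ℤ) < 0), if_neg (by omega : ¬ (M:ℤ) ≤ (l:ℤ) - 2)]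
  -- Step 3: H as a sum of F's
  have hH : H l N (M:ℤ) = ∑ k ∈ Finset.range (N+2), F ((M:ℤ) + 2*k*l) N := by
    unfold H S
    rw [← Finset.sum_sub_distrib]
    apply Finset.sum_congr rfl
    intro k _
    rw [F_eq_aa]
    · congr 2
      ring
    · obtain ⟨j, hj⟩ : ∃ j : ℤ, 2*(k:ℤ)*(l:ℤ) = 2*j := ⟨(k:ℤ)*l, by ring⟩
      rw [hj]
      omega
  rw [hH]
  -- Step 4: final index juggling
  set K : ℤ := Int.fdiv ((N:ℤ) - l + 1) (2*l) with hK
  have h2lpos : (0:ℤ) < 2*l := by omega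
  have hfd : K = ((N:ℤ) - l + 1) / (2*l) := by
    rw [hK, Int.fdiv_eq_ediv_of_nonneg _ (by omega : (0:ℤ) ≤ 2*l)]
  have hdm := Int.mul_ediv_add_emod ((N:ℤ) - l + 1) (2*l)
  have hr1 : 0 ≤ ((N:ℤ) - l + 1) % (2*l) := Int.emod_nonneg _ (by omega)
  have hr2 : ((N:ℤ) - l + 1) % (2*l) < 2*l := Int.emod_lt_of_pos _ h2lpos
  have hbound : 2*(l:ℤ)*K ≤ (N:ℤ) - l + 1 := by
    rw [hfd]; omega
  have hvanish : ∀ k : ℕ, K < (k:ℤ) → F ((M:ℤ) + 2*k*l) N = 0 := by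
    intro k hk
    apply F_big
    have h1 : 2*(l:ℤ)*(K+1) ≤ 2*l*k := by
      apply mul_le_mul_of_nonneg_left _ (by omega : (0:ℤ) ≤ 2*l)
      omega
    nlinarith
  have hKN : K ≤ (N:ℤ) := by
    rcases le_or_gt K 0 with h | h
    · omega
    · nlinarith
  rw [Finset.sum_range_succ' (fun k => F ((M:ℤ) + 2*k*l) N) (N+1)]
  have h0 : F ((M:ℤ) + 2*((0:ℕ):ℤ)*l) N = F (M:ℤ) N := by norm_num
  rw [h0]
  have hstep : ∑ k ∈ Finset.range (N+1), F ((M:ℤ) + 2*((k+1:ℕ):ℤ)*l) N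
      = ∑ k ∈ Finset.Icc (1:ℤ) K, F ((M:ℤ) + 2*k*l) N := by
    rw [← Finset.sum_subset (Finset.range_subset_range.2 (by omega : K.toNat ≤ N+1))
      (fun k _ hk => ?_)]
    · refine Finset.sum_nbij' (fun j : ℕ => (j:ℤ)+1) (fun k : ℤ => (k-1).toNat)
        ?_ ?_ ?_ ?_ ?_
      · intro a ha
        simp only [Finset.mem_range] at ha
        simp only [Finset.mem_Icc]
        omega
      · intro a ha
        simp only [Finset.mem_Icc] at ha
        simp only [Finset.mem_range]
        omega
      · intro a _
        show ((a:ℤ) + 1 - 1).toNat = a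
        omega
      · intro a ha
        simp only [Finset.mem_Icc] at ha
        show (((a - 1).toNat : ℤ)) + 1 = a
        omega
      · intro a _
        have e : ((a+1:ℕ):ℤ) = (a:ℤ)+1 := by push_cast; ring
        rw [e]
    · apply hvanish
      simp only [Finset.mem_range] at hk ⊢
      push_cast
      omega
  rw [hstep]
  push_cast
  ring
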